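/- Let γ: (-2ε,2ε) → E be piecewise C¹ (with corner at 0) and let δ ∈ (0,ε]. Then for every t ∈ (-ε,ε), γ_δ is differentiable at t and its derivative is given by the formula γ_δ′(t) = ∫_ℝ γ′(t − σ_δ(t)s) · (1 − s·δ·σ′(t/δ)) · φ(s) ds. -/

import Mathlib

open MeasureTheory Set

/-- The variable mollification scale `σ_δ(t) = δ² σ(t/δ)`. -/
noncomputable def sigmaDel (σ : ℝ → ℝ) (δ t : ℝ) : ℝ := δ ^ 2 * σ (t / δ)

/-- The variable-scale mollification `γ_δ(s) = ∫ γ(s - σ_δ(s) t) φ(t) dt` (Bochner integral). -/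
noncomputable def mollify {E : Type*} [NormedAddCommGroup E] [NormedSpace ℝ E]
    (φ σ : ℝ → ℝ) (δ : ℝ) (γ : ℝ → E) (s : ℝ) : E :=
  ∫ t : ℝ, φ t • γ (s - sigmaDel σ δ s * t)

lemma supp_zero {f : ℝ → ℝ} {s : Set ℝ} (h : Function.support f ⊆ s) {x : ℝ} (hx : x ∉ s) :
    f x = 0 := by
  by_contra h0
  exact hx (h (Function.mem_support.2 h0))

lemma deriv_supp_zero {f : ℝ → ℝ} {a b : ℝ} (h : Function.support f ⊆ Icc a b) {x : ℝ}
    (hx : x ∉ Icc a b) : deriv f x = 0 := by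
  have hev : f =ᶠ[nhds x] fun _ => (0 : ℝ) := by
    filter_upwards [isClosed_Icc.isOpen_compl.mem_nhds hx] with y hy
    exact supp_zero h hy
  rw [hev.deriv_eq, deriv_const]

lemma integral_comp_affine {E : Type*} [NormedAddCommGroup E] [NormedSpace ℝ E]
    (g : ℝ → E) {c : ℝ} (hc : 0 < c) (s : ℝ) :
    ∫ u : ℝ, g (s - c * u) = c⁻¹ • ∫ x : ℝ, g x := by
  have h1 := MeasureTheory.Measure.integral_comp_mul_left (fun x : ℝ => g (s - x)) c
  rw [h1, MeasureTheory.integral_sub_left_eq_self g volume s, abs_of_pos (inv_pos.2 hc)]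

set_option maxHeartbeats 1000000 in
theorem mollify_hasDerivAt
    {E : Type*} [NormedAddCommGroup E] [NormedSpace ℝ E] [CompleteSpace E]
    (ε : ℝ) (hε0 : 0 < ε) (hε1 : ε ≤ 1)
    (φ σ : ℝ → ℝ)
    (hφsm : ContDiff ℝ (⊤ : ℕ∞) φ) (hφsupp : Function.support φ ⊆ Set.Icc (-1) 1)
    (hφ0 : ∀ t, 0 ≤ φ t) (hφ1 : ∀ t, φ t ≤ 1) (hφint : (∫ t : ℝ, φ t) = 1)
    (hσsm : ContDiff ℝ (⊤ : ℕ∞) σ) (hσsupp : Function.support σ ⊆ Set.Icc (-(1/2)) (1/2))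
    (hσ0 : ∀ t, 0 ≤ σ t) (hσle : ∀ t, σ t ≤ 1/100)
    (hσeq : ∀ t : ℝ, |t| ≤ 1/4 → σ t = 1/100)
    (hσpos : ∀ t : ℝ, 1/4 < |t| → |t| < 1/2 → 0 < σ t)
    (γ : ℝ → E)
    (hγcont : ContinuousOn γ (Set.Ioo (-(2*ε)) (2*ε)))
    (hγm : ContDiffOn ℝ 1 γ (Set.Ioc (-(2*ε)) 0))
    (hγp : ContDiffOn ℝ 1 γ (Set.Ico 0 (2*ε)))
    (γ' : ℝ → E)
    (hγ'1 : ∀ u ∈ Set.Ioo (-(2*ε)) (2*ε), u ≠ 0 → HasDerivAt γ (γ' u) u)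
    (hγ'0 : HasDerivWithinAt γ (γ' 0) (Set.Ici 0) 0)
    (δ : ℝ) (hδ0 : 0 < δ) (hδε : δ ≤ ε)
 :
    ∀ t ∈ Set.Ioo (-ε) ε,
      HasDerivAt (mollify φ σ δ γ)
        (∫ s : ℝ, ((1 - s * δ * deriv σ (t/δ)) * φ s) • γ' (t - sigmaDel σ δ t * s)) t := by
  intro t ht
  have h1top : (1 : WithTop ℕ∞) ≤ ((⊤ : ℕ∞) : WithTop ℕ∞) := by
    exact_mod_cast (le_top : (1 : ℕ∞) ≤ ⊤)
  have hδ1 : δ ≤ 1 := hδε.trans hε1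
  set c : ℝ := δ^2/100 with hcdef
  have hc0 : 0 < c := by positivity
  have hcδ : c ≤ δ/100 := by rw [hcdef]; nlinarith
  have hcε : c ≤ ε/100 := hcδ.trans (by linarith)
  have htε : |t| < ε := abs_lt.2 ⟨ht.1, ht.2⟩
  have hφc : Continuous φ := hφsm.continuous
  have hφc' : Continuous (deriv φ) := hφsm.continuous_deriv h1top
  have hφz : ∀ x : ℝ, x ∉ Icc (-1:ℝ) 1 → φ x = 0 := fun x hx => supp_zero hφsupp hx
  have hφz' : ∀ x : ℝ, x ∉ Icc (-1:ℝ) 1 → deriv φ x = 0 := fun x hx => deriv_supp_zero hφsupp hx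
  have hφd : ∀ x : ℝ, HasDerivAt φ (deriv φ x) x := fun x =>
    (hφsm.differentiable (by simp) x).hasDerivAt
  have hsd0 : ∀ x : ℝ, 0 ≤ sigmaDel σ δ x := fun x => mul_nonneg (by positivity) (hσ0 _)
  have hsdc : ∀ x : ℝ, sigmaDel σ δ x ≤ c := by
    intro x
    have h1 := hσle (x/δ)
    show δ^2 * σ (x/δ) ≤ c
    rw [hcdef]
    nlinarith [sq_nonneg δ, hσ0 (x/δ)]
  have habs_mul : ∀ (x u : ℝ), |u| ≤ 1 → |sigmaDel σ δ x * u| ≤ c := by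
    intro x u hu
    rw [abs_mul, abs_of_nonneg (hsd0 x)]
    nlinarith [hsd0 x, hsdc x, abs_nonneg u]
  have hγ'cont : ∀ x : ℝ, x ∈ Ioo (-(2*ε)) (2*ε) → x ≠ 0 → ContinuousAt γ' x := by
    intro x hx hx0
    rcases hx0.lt_or_gt with hneg | hpos
    · have hU : IsOpen (Ioo (-(2*ε)) (0:ℝ)) := isOpen_Ioo
      have hxU : x ∈ Ioo (-(2*ε)) (0:ℝ) := ⟨hx.1, hneg⟩
      have h1 : ContinuousOn (deriv γ) (Ioo (-(2*ε)) 0) :=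
        (hγm.mono Ioo_subset_Ioc_self).continuousOn_deriv_of_isOpen hU le_rfl
      have h2 : ContinuousAt (deriv γ) x := h1.continuousAt (hU.mem_nhds hxU)
      have hev : γ' =ᶠ[nhds x] deriv γ := by
        filter_upwards [hU.mem_nhds hxU] with y hy
        exact ((hγ'1 y ⟨hy.1, lt_trans hy.2 (by linarith)⟩ (ne_of_lt hy.2)).deriv).symm
      exact (continuousAt_congr hev).2 h2
    · have hU : IsOpen (Ioo (0:ℝ) (2*ε)) := isOpen_Ioo
      have hxU : x ∈ Ioo (0:ℝ) (2*ε) := ⟨hpos, hx.2⟩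
      have h1 : ContinuousOn (deriv γ) (Ioo 0 (2*ε)) :=
        (hγp.mono Ioo_subset_Ico_self).continuousOn_deriv_of_isOpen hU le_rfl
      have h2 : ContinuousAt (deriv γ) x := h1.continuousAt (hU.mem_nhds hxU)
      have hev : γ' =ᶠ[nhds x] deriv γ := by
        filter_upwards [hU.mem_nhds hxU] with y hy
        exact ((hγ'1 y ⟨by linarith [hy.1], hy.2⟩ (ne_of_gt hy.1)).deriv).symm
      exact (continuousAt_congr hev).2 h2
  rcases le_or_gt |t| c with htc | htc
  · -- Case B : |t| ≤ c, so the scale is locally constant equal to c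
    have hσtδ : σ (t/δ) = 1/100 := by
      apply hσeq
      rw [abs_div, abs_of_pos hδ0, div_le_iff₀ hδ0]
      nlinarith [htc, hcδ]
    have hsdt : sigmaDel σ δ t = c := by
      show δ^2 * σ (t/δ) = c
      rw [hσtδ, hcdef]; ring
    have hderivσt : deriv σ (t/δ) = 0 := by
      have hev : σ =ᶠ[nhds (t/δ)] fun _ => (1/100 : ℝ) := by
        have hop : IsOpen {x : ℝ | |x| < 1/4} := isOpen_lt continuous_abs continuous_const
        have hmem : t/δ ∈ {x : ℝ | |x| < 1/4} := by
          simp only [mem_setOf_eq, abs_div, abs_of_pos hδ0]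
          rw [div_lt_iff₀ hδ0]
          nlinarith [htc, hcδ]
        filter_upwards [hop.mem_nhds hmem] with y hy
        exact hσeq y (le_of_lt hy)
      rw [hev.deriv_eq, deriv_const]
    rw [show (∫ s : ℝ, ((1 - s * δ * deriv σ (t/δ)) * φ s) • γ' (t - sigmaDel σ δ t * s))
        = ∫ u : ℝ, φ u • γ' (t - c * u) by
      rw [hderivσt, hsdt]; simp only [mul_zero, sub_zero, one_mul]]
    -- continuity helper
    have haux : ∀ (ψ : ℝ → ℝ), Continuous ψ → (∀ x : ℝ, x ∉ Icc (-1:ℝ) 1 → ψ x = 0) →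
        ∀ s : ℝ, |s| ≤ ε/2 → Continuous (fun v => ψ ((s - v)/c) • γ v) := by
      intro ψ hψc hψz s hs
      rw [continuous_iff_continuousAt]
      intro v₀
      by_cases hv : v₀ ∈ Ioo (-(2*ε)) (2*ε)
      · exact ((hψc.comp ((continuous_const.sub continuous_id).div_const c)).continuousAt).smul
          (hγcont.continuousAt (isOpen_Ioo.mem_nhds hv))
      · have hv2 : 2*ε ≤ |v₀| := by
          simp only [mem_Ioo, not_and_or, not_lt] at hv
          rcases hv with h | h
          · rw [abs_of_nonpos (by linarith)]; linarith
          · rw [abs_of_nonneg (by linarith)]; linarith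
        have hop : IsOpen {v : ℝ | c < |s - v|} :=
          isOpen_lt continuous_const (continuous_const.sub continuous_id).abs
        have hmem : v₀ ∈ {v : ℝ | c < |s - v|} := by
          simp only [mem_setOf_eq]
          have h1 : |v₀| - |s| ≤ |s - v₀| := by
            have h2 := abs_sub_abs_le_abs_sub v₀ s
            rw [abs_sub_comm v₀ s] at h2; linarith
          linarith
        have hev : (fun v => ψ ((s - v)/c) • γ v) =ᶠ[nhds v₀] fun _ => (0:E) := by
          filter_upwards [hop.mem_nhds hmem] with v hvmem
          have hz : ψ ((s - v)/c) = 0 := by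
            apply hψz
            intro hIcc
            have h2 : |(s - v)/c| ≤ 1 := abs_le.2 ⟨hIcc.1, hIcc.2⟩
            rw [abs_div, abs_of_pos hc0, div_le_one hc0] at h2
            exact absurd h2 (not_le.2 hvmem)
          rw [hz, zero_smul]
        exact (continuousAt_congr hev).2 continuousAt_const
    have hsupp_sub : ∀ (ψ : ℝ → ℝ), (∀ x : ℝ, x ∉ Icc (-1:ℝ) 1 → ψ x = 0) →
        ∀ s v : ℝ, v ∉ Icc (s - c) (s + c) → ψ ((s - v)/c) • γ v = 0 := by
      intro ψ hψz s v hv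
      have hz : ψ ((s - v)/c) = 0 := by
        apply hψz
        intro hIcc
        apply hv
        have h2 : |(s - v)/c| ≤ 1 := abs_le.2 ⟨hIcc.1, hIcc.2⟩
        rw [abs_div, abs_of_pos hc0, div_le_one hc0] at h2
        have h3 := abs_le.1 h2
        exact ⟨by linarith [h3.2], by linarith [h3.1]⟩
      rw [hz, zero_smul]
    obtain ⟨Mφ, hMφ⟩ : ∃ M : ℝ, ∀ x : ℝ, |deriv φ x| ≤ M := by
      obtain ⟨M, hM⟩ :=
        ((HasCompactSupport.intro isCompact_Icc hφz).deriv).exists_bound_of_continuous hφc'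
      exact ⟨M, fun x => by simpa using hM x⟩
    have hMφ0 : 0 ≤ Mφ := le_trans (abs_nonneg _) (hMφ 0)
    obtain ⟨Cγ, hCγ⟩ : ∃ C : ℝ, ∀ x ∈ Icc (-ε) ε, ‖γ x‖ ≤ C :=
      isCompact_Icc.exists_bound_of_continuousOn
        (hγcont.mono (fun x hx => ⟨by linarith [hx.1], by linarith [hx.2]⟩))
    have hCγ0 : 0 ≤ Cγ := le_trans (norm_nonneg _) (hCγ 0 ⟨by linarith, by linarith⟩)
    have hball_s : ∀ x ∈ Metric.ball t (ε/4), |x| ≤ ε/2 := by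
      intro x hx
      rw [Metric.mem_ball, Real.dist_eq] at hx
      have h1 : |x| - |t| ≤ |x - t| := abs_sub_abs_le_abs_sub x t
      linarith
    have htε2 : |t| ≤ ε/2 := by linarith
    -- derivative of G via dominated convergence
    have hGderiv : HasDerivAt (fun s : ℝ => ∫ v : ℝ, φ ((s - v)/c) • γ v)
        (∫ v : ℝ, (c⁻¹ * deriv φ ((t - v)/c)) • γ v) t := by
      have hmeas : ∀ᶠ x in nhds t,
          AEStronglyMeasurable (fun v : ℝ => φ ((x - v)/c) • γ v) volume := by
        filter_upwards [Metric.ball_mem_nhds t (show (0:ℝ) < ε/4 by positivity)] with x hx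
        exact (haux φ hφc hφz x (hball_s x hx)).aestronglyMeasurable
      have hint : Integrable (fun v : ℝ => φ ((t - v)/c) • γ v) volume := by
        apply (haux φ hφc hφz t htε2).integrable_of_hasCompactSupport
        exact HasCompactSupport.intro isCompact_Icc (hsupp_sub φ hφz t)
      have hmeas' : AEStronglyMeasurable
          (fun v : ℝ => (c⁻¹ * deriv φ ((t - v)/c)) • γ v) volume :=
        (haux (fun y => c⁻¹ * deriv φ y) (continuous_const.mul hφc')
          (fun x hx => by show c⁻¹ * deriv φ x = 0; rw [hφz' x hx, mul_zero]) t htε2).aestronglyMeasurable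
      have hbound : ∀ᵐ v ∂(volume : Measure ℝ), ∀ x ∈ Metric.ball t (ε/4),
          ‖(c⁻¹ * deriv φ ((x - v)/c)) • γ v‖ ≤
            (Icc (-ε) ε).indicator (fun _ => c⁻¹ * Mφ * Cγ) v := by
        apply ae_of_all
        intro v x hx
        by_cases hv : v ∈ Icc (-ε) ε
        · rw [indicator_of_mem hv]
          show ‖(c⁻¹ * deriv φ ((x - v)/c)) • γ v‖ ≤ c⁻¹ * Mφ * Cγ
          rw [norm_smul, Real.norm_eq_abs, abs_mul, abs_of_pos (inv_pos.2 hc0)]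
          have h1 : c⁻¹ * |deriv φ ((x - v)/c)| ≤ c⁻¹ * Mφ :=
            mul_le_mul_of_nonneg_left (hMφ _) (by positivity)
          have h2 : ‖γ v‖ ≤ Cγ := hCγ v hv
          have h3 : 0 ≤ c⁻¹ * |deriv φ ((x - v)/c)| := by positivity
          nlinarith [norm_nonneg (γ v)]
        · rw [indicator_of_notMem hv]
          have hvε : ε < |v| := by
            simp only [mem_Icc, not_and_or, not_le] at hv
            rcases hv with h | h
            · rw [abs_of_neg (by linarith)]; linarith
            · rw [abs_of_pos (by linarith)]; linarith
          have hxv : c < |x - v| := by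
            have h1 : |v| - |x| ≤ |x - v| := by
              have h2 := abs_sub_abs_le_abs_sub v x
              rw [abs_sub_comm v x] at h2; linarith
            have h2 := hball_s x hx
            linarith
          have hz : deriv φ ((x - v)/c) = 0 := by
            apply hφz'
            intro hIcc
            have h2 : |(x - v)/c| ≤ 1 := abs_le.2 ⟨hIcc.1, hIcc.2⟩
            rw [abs_div, abs_of_pos hc0, div_le_one hc0] at h2
            linarith
          rw [hz, mul_zero, zero_smul, norm_zero]
      have hbint : Integrable ((Icc (-ε) ε).indicator (fun _ => c⁻¹ * Mφ * Cγ)) volume := by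
        rw [integrable_indicator_iff measurableSet_Icc]
        exact integrableOn_const isCompact_Icc.measure_lt_top.ne
      have hdiff : ∀ᵐ v ∂(volume : Measure ℝ), ∀ x ∈ Metric.ball t (ε/4),
          HasDerivAt (fun x : ℝ => φ ((x - v)/c) • γ v)
            ((c⁻¹ * deriv φ ((x - v)/c)) • γ v) x := by
        apply ae_of_all
        intro v x _
        have h1 : HasDerivAt (fun x : ℝ => (x - v)/c) (1/c) x := by
          simpa using ((hasDerivAt_id x).sub_const v).div_const c
        have h2 : HasDerivAt (fun x : ℝ => φ ((x - v)/c))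
            (deriv φ ((x - v)/c) * (1/c)) x := by
          simpa [Function.comp_def] using (hφd ((x - v)/c)).comp x h1
        have h3 := h2.smul_const (γ v)
        have h4 : c⁻¹ * deriv φ ((x - v)/c) = deriv φ ((x - v)/c) * (1/c) := by ring
        rw [h4]; exact h3
      exact (hasDerivAt_integral_of_dominated_loc_of_deriv_le
        (Metric.ball_mem_nhds t (show (0:ℝ) < ε/4 by positivity)) hmeas hint hmeas' hbound hbint hdiff).2
    -- substitution identities
    have hfrac : ∀ s u : ℝ, (s - (s - c*u))/c = u := by
      intro s u; field_simp; ring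
    set P : ℝ → E := fun u => deriv φ u • γ (t - c*u) with hP
    set H : E := ∫ u : ℝ, P u with hHdef
    set D : E := ∫ u : ℝ, φ u • γ' (t - c * u) with hD
    have hIG' : (∫ v : ℝ, (c⁻¹ * deriv φ ((t - v)/c)) • γ v) = H := by
      have h1 : (∫ u : ℝ, (c⁻¹ * deriv φ ((t - (t - c*u))/c)) • γ (t - c*u))
          = c⁻¹ • ∫ v : ℝ, (c⁻¹ * deriv φ ((t - v)/c)) • γ v :=
        integral_comp_affine (fun x => (c⁻¹ * deriv φ ((t - x)/c)) • γ x) hc0 t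
      have h2 : (∫ u : ℝ, (c⁻¹ * deriv φ ((t - (t - c*u))/c)) • γ (t - c*u)) = c⁻¹ • H := by
        rw [hHdef, ← integral_smul]
        congr 1; funext u
        show (c⁻¹ * deriv φ ((t - (t - c*u))/c)) • γ (t - c*u)
            = c⁻¹ • (deriv φ u • γ (t - c*u))
        rw [hfrac, mul_smul]
      rw [h2] at h1
      exact (smul_right_injective E (inv_ne_zero hc0.ne') h1).symm
    set F : ℝ → E := fun s => ∫ u : ℝ, φ u • γ (s - c*u) with hF
    have hFG : F = fun s : ℝ => c⁻¹ • ∫ v : ℝ, φ ((s - v)/c) • γ v := by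
      rw [hF]
      funext s
      show (∫ u : ℝ, φ u • γ (s - c*u)) = c⁻¹ • ∫ v : ℝ, φ ((s - v)/c) • γ v
      rw [← integral_comp_affine (fun x => φ ((s - x)/c) • γ x) hc0 s]
      congr 1; funext u
      rw [hfrac]
    have hFd : HasDerivAt F (c⁻¹ • H) t := by
      rw [hFG, ← hIG']
      exact hGderiv.const_smul c⁻¹
    -- now show H = c • D by integration by parts
    set u₀ : ℝ := t / c with hu₀def
    have hcu₀ : c * u₀ = t := by rw [hu₀def]; field_simp
    have hu₀1 : |u₀| ≤ 1 := by
      rw [hu₀def, abs_div, abs_of_pos hc0, div_le_one hc0]; exact htc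
    have hu₀m := abs_le.1 hu₀1
    have h2u₀ : (-2:ℝ) ≤ u₀ := by linarith [hu₀m.1]
    have hu₀2 : u₀ ≤ 2 := by linarith [hu₀m.2]
    have harg_mem : ∀ u ∈ Icc (-2:ℝ) 2, t - c*u ∈ Ioo (-(2*ε)) (2*ε) := by
      intro u hu
      have hu2 : |u| ≤ 2 := abs_le.2 ⟨hu.1, hu.2⟩
      have h1 : |c*u| ≤ 2*c := by
        rw [abs_mul, abs_of_pos hc0]
        nlinarith
      have h2 := abs_le.1 h1
      have h3 := abs_le.1 htc
      constructor
      · nlinarith [hcε, hε0]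
      · nlinarith [hcε, hε0]
    have haffc : Continuous (fun u : ℝ => t - c*u) :=
      continuous_const.sub (continuous_const.mul continuous_id)
    have hγaff : ContinuousOn (fun u : ℝ => γ (t - c*u)) (Icc (-2:ℝ) 2) :=
      hγcont.comp haffc.continuousOn (fun u hu => harg_mem u hu)
    set W : ℝ → E := fun u => φ u • γ (t - c*u) with hW
    have hWcont : ContinuousOn W (Icc (-2:ℝ) 2) := (hφc.continuousOn).smul hγaff
    have hPcont : ContinuousOn P (Icc (-2:ℝ) 2) := (hφc'.continuousOn).smul hγaff
    have hUDp : UniqueDiffOn ℝ (Ico (0:ℝ) (2*ε)) := uniqueDiffOn_Ico 0 (2*ε)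
    set gp : ℝ → E := derivWithin γ (Ico 0 (2*ε)) with hgpdef
    have hgpc : ContinuousOn gp (Ico 0 (2*ε)) := hγp.continuousOn_derivWithin hUDp le_rfl
    have hgp : ∀ x ∈ Ico (0:ℝ) (2*ε), γ' x = gp x := by
      intro x hx
      rcases eq_or_lt_of_le hx.1 with h0 | h0
      · rw [← h0]
        rw [← h0] at hx
        exact ((hγ'0.mono Ico_subset_Ici_self).derivWithin (hUDp 0 hx)).symm
      · exact (((hγ'1 x ⟨by linarith [hx.2], hx.2⟩ (ne_of_gt h0)).hasDerivWithinAt).derivWithin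
          (hUDp x hx)).symm
    have hUDm : UniqueDiffOn ℝ (Ioc (-(2*ε)) (0:ℝ)) := uniqueDiffOn_Ioc _ _
    set gm : ℝ → E := derivWithin γ (Ioc (-(2*ε)) 0) with hgmdef
    have hgmc : ContinuousOn gm (Ioc (-(2*ε)) (0:ℝ)) := hγm.continuousOn_derivWithin hUDm le_rfl
    have hgm : ∀ x ∈ Ioo (-(2*ε)) (0:ℝ), γ' x = gm x := by
      intro x hx
      exact (((hγ'1 x ⟨hx.1, by linarith [hx.2]⟩ (ne_of_lt hx.2)).hasDerivWithinAt).derivWithin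
        (hUDm x ⟨hx.1, le_of_lt hx.2⟩)).symm
    have hmapsp : ∀ u ∈ Icc (-2:ℝ) u₀, t - c*u ∈ Ico (0:ℝ) (2*ε) := by
      intro u hu
      constructor
      · have h1 : c*u ≤ c*u₀ := mul_le_mul_of_nonneg_left hu.2 hc0.le
        rw [hcu₀] at h1; linarith
      · exact (harg_mem u ⟨hu.1, by linarith [hu.2, hu₀2]⟩).2
    have hmapsm : ∀ u ∈ Icc u₀ (2:ℝ), t - c*u ∈ Ioc (-(2*ε)) (0:ℝ) := by
      intro u hu
      constructor
      · exact (harg_mem u ⟨by linarith [hu.1, h2u₀], hu.2⟩).1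
      · have h1 : c*u₀ ≤ c*u := mul_le_mul_of_nonneg_left hu.1 hc0.le
        rw [hcu₀] at h1; linarith
    set Qp : ℝ → E := fun u => (c * φ u) • gp (t - c*u) with hQp
    set Qm : ℝ → E := fun u => (c * φ u) • gm (t - c*u) with hQm
    have hQpcont : ContinuousOn Qp (Icc (-2:ℝ) u₀) :=
      ((continuous_const.mul hφc).continuousOn).smul
        (hgpc.comp haffc.continuousOn hmapsp)
    have hQmcont : ContinuousOn Qm (Icc u₀ (2:ℝ)) :=
      ((continuous_const.mul hφc).continuousOn).smul
        (hgmc.comp haffc.continuousOn hmapsm)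
    have hinner : ∀ x : ℝ, HasDerivAt (fun u : ℝ => t - c*u) (-c) x := by
      intro x
      simpa using ((hasDerivAt_id x).const_mul c).const_sub t
    have hFTC1 : ∫ u in (-2:ℝ)..u₀, (P u - Qp u) = W u₀ - W (-2) := by
      apply intervalIntegral.integral_eq_sub_of_hasDeriv_right_of_le h2u₀
        (hWcont.mono (Icc_subset_Icc le_rfl hu₀2))
      · intro x hx
        have hargIoo : t - c*x ∈ Ioo (0:ℝ) (2*ε) := by
          constructor
          · have h1 : c*x < c*u₀ := mul_lt_mul_of_pos_left hx.2 hc0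
            rw [hcu₀] at h1; linarith
          · exact (harg_mem x ⟨le_of_lt hx.1, by linarith [hx.2, hu₀2]⟩).2
        have hγd : HasDerivAt γ (γ' (t - c*x)) (t - c*x) :=
          hγ'1 _ ⟨by linarith [hargIoo.1], hargIoo.2⟩ (ne_of_gt hargIoo.1)
        have hcomp : HasDerivAt (fun u : ℝ => γ (t - c*u)) ((-c) • γ' (t - c*x)) x := by
          have h9 := HasDerivAt.scomp x hγd (hinner x)
          simpa [Function.comp_def] using h9
        have hprod := (hφd x).smul hcomp
        apply HasDerivAt.hasDerivWithinAt
        have hrepl : γ' (t - c*x) = gp (t - c*x) := hgp _ ⟨le_of_lt hargIoo.1, hargIoo.2⟩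
        convert hprod using 1
        show deriv φ x • γ (t - c*x) - (c * φ x) • gp (t - c*x)
            = φ x • ((-c) • γ' (t - c*x)) + deriv φ x • γ (t - c*x)
        rw [← hrepl]
        module
        rfl
      · apply ContinuousOn.intervalIntegrable
        rw [uIcc_of_le h2u₀]
        exact (hPcont.mono (Icc_subset_Icc le_rfl hu₀2)).sub hQpcont
    have hFTC2 : ∫ u in u₀..(2:ℝ), (P u - Qm u) = W 2 - W u₀ := by
      apply intervalIntegral.integral_eq_sub_of_hasDeriv_right_of_le hu₀2
        (hWcont.mono (Icc_subset_Icc h2u₀ le_rfl))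
      · intro x hx
        have hargIoo : t - c*x ∈ Ioo (-(2*ε)) (0:ℝ) := by
          constructor
          · exact (harg_mem x ⟨by linarith [hx.1, h2u₀], le_of_lt hx.2⟩).1
          · have h1 : c*u₀ < c*x := mul_lt_mul_of_pos_left hx.1 hc0
            rw [hcu₀] at h1; linarith
        have hγd : HasDerivAt γ (γ' (t - c*x)) (t - c*x) :=
          hγ'1 _ ⟨hargIoo.1, by linarith [hargIoo.2]⟩ (ne_of_lt hargIoo.2)
        have hcomp : HasDerivAt (fun u : ℝ => γ (t - c*u)) ((-c) • γ' (t - c*x)) x := by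
          have h9 := HasDerivAt.scomp x hγd (hinner x)
          simpa [Function.comp_def] using h9
        have hprod := (hφd x).smul hcomp
        apply HasDerivAt.hasDerivWithinAt
        have hrepl : γ' (t - c*x) = gm (t - c*x) := hgm _ hargIoo
        convert hprod using 1
        show deriv φ x • γ (t - c*x) - (c * φ x) • gm (t - c*x)
            = φ x • ((-c) • γ' (t - c*x)) + deriv φ x • γ (t - c*x)
        rw [← hrepl]
        module
        rfl
      · apply ContinuousOn.intervalIntegrable
        rw [uIcc_of_le hu₀2]
        exact (hPcont.mono (Icc_subset_Icc h2u₀ le_rfl)).sub hQmcont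
    have hWm2 : W (-2:ℝ) = 0 := by
      have hz : φ (-2:ℝ) = 0 := hφz _ (by simp only [mem_Icc]; norm_num)
      rw [hW]; simp only [hz, zero_smul]
    have hW2 : W (2:ℝ) = 0 := by
      have hz : φ (2:ℝ) = 0 := hφz _ (by simp only [mem_Icc]; norm_num)
      rw [hW]; simp only [hz, zero_smul]
    have hPi1 : IntervalIntegrable P volume (-2) u₀ := by
      apply ContinuousOn.intervalIntegrable
      rw [uIcc_of_le h2u₀]
      exact hPcont.mono (Icc_subset_Icc le_rfl hu₀2)
    have hPi2 : IntervalIntegrable P volume u₀ 2 := by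
      apply ContinuousOn.intervalIntegrable
      rw [uIcc_of_le hu₀2]
      exact hPcont.mono (Icc_subset_Icc h2u₀ le_rfl)
    have hQpi : IntervalIntegrable Qp volume (-2) u₀ := by
      apply ContinuousOn.intervalIntegrable
      rw [uIcc_of_le h2u₀]
      exact hQpcont
    have hQmi : IntervalIntegrable Qm volume u₀ 2 := by
      apply ContinuousOn.intervalIntegrable
      rw [uIcc_of_le hu₀2]
      exact hQmcont
    set R : ℝ → E := fun u => c • (φ u • γ' (t - c*u)) with hR
    have hQpR : EqOn Qp R (Icc (-2:ℝ) u₀) := by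
      intro u hu
      show (c * φ u) • gp (t - c*u) = c • (φ u • γ' (t - c*u))
      rw [← hgp _ (hmapsp u hu), smul_smul]
    have hQmR : EqOn Qm R (Ioc u₀ (2:ℝ)) := by
      intro u hu
      have harg : t - c*u ∈ Ioo (-(2*ε)) (0:ℝ) := by
        constructor
        · exact (harg_mem u ⟨by linarith [hu.1.le, h2u₀], hu.2⟩).1
        · have h1 : c*u₀ < c*u := mul_lt_mul_of_pos_left hu.1 hc0
          rw [hcu₀] at h1; linarith
      show (c * φ u) • gm (t - c*u) = c • (φ u • γ' (t - c*u))
      rw [← hgm _ harg, smul_smul]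
    have hIQp : ∫ u in (-2:ℝ)..u₀, Qp u = ∫ u in (-2:ℝ)..u₀, R u :=
      intervalIntegral.integral_congr (by rw [uIcc_of_le h2u₀]; exact hQpR)
    have hIQm : ∫ u in u₀..(2:ℝ), Qm u = ∫ u in u₀..(2:ℝ), R u := by
      rw [intervalIntegral.integral_of_le hu₀2, intervalIntegral.integral_of_le hu₀2]
      exact setIntegral_congr_fun measurableSet_Ioc hQmR
    have hRi1 : IntervalIntegrable R volume (-2) u₀ := by
      apply ContinuousOn.intervalIntegrable
      rw [uIcc_of_le h2u₀]
      exact hQpcont.congr hQpR.symm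
    have hRi2 : IntervalIntegrable R volume u₀ 2 := by
      rw [intervalIntegrable_iff_integrableOn_Ioc_of_le hu₀2]
      have h1 : IntegrableOn Qm (Ioc u₀ 2) volume :=
        (intervalIntegrable_iff_integrableOn_Ioc_of_le hu₀2).1 hQmi
      exact h1.congr_fun hQmR measurableSet_Ioc
    have hextend : ∀ (f : ℝ → E), (∀ u : ℝ, u ∉ Icc (-1:ℝ) 1 → f u = 0) →
        (∫ u : ℝ, f u) = ∫ u in (-2:ℝ)..2, f u := by
      intro f hf
      rw [intervalIntegral.integral_of_le (by norm_num : (-2:ℝ) ≤ 2),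
        ← MeasureTheory.integral_indicator measurableSet_Ioc]
      congr 1
      funext u
      by_cases hu : u ∈ Ioc (-2:ℝ) 2
      · rw [indicator_of_mem hu]
      · rw [indicator_of_notMem hu]
        exact hf u (fun hmem => hu ⟨by linarith [hmem.1], by linarith [hmem.2]⟩)
    have hHsplit : H = (∫ u in (-2:ℝ)..u₀, P u) + ∫ u in u₀..(2:ℝ), P u := by
      rw [hHdef]
      rw [hextend P (fun u hu => by
        show deriv φ u • γ (t - c*u) = 0
        rw [hφz' u hu, zero_smul])]
      exact (intervalIntegral.integral_add_adjacent_intervals hPi1 hPi2).symm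
    have hQsum : (∫ u in (-2:ℝ)..u₀, Qp u) + (∫ u in u₀..(2:ℝ), Qm u) = c • D := by
      rw [hIQp, hIQm, intervalIntegral.integral_add_adjacent_intervals hRi1 hRi2]
      rw [← hextend R (fun u hu => by
        show c • (φ u • γ' (t - c*u)) = 0
        rw [hφz u hu, zero_smul, smul_zero])]
      rw [hR, hD]
      exact integral_smul c _
    have hs1 : ∫ u in (-2:ℝ)..u₀, (P u - Qp u)
        = (∫ u in (-2:ℝ)..u₀, P u) - ∫ u in (-2:ℝ)..u₀, Qp u :=
      intervalIntegral.integral_sub hPi1 hQpi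
    have hs2 : ∫ u in u₀..(2:ℝ), (P u - Qm u)
        = (∫ u in u₀..(2:ℝ), P u) - ∫ u in u₀..(2:ℝ), Qm u :=
      intervalIntegral.integral_sub hPi2 hQmi
    have e1 : (∫ u in (-2:ℝ)..u₀, P u) - (∫ u in (-2:ℝ)..u₀, Qp u) = W u₀ - W (-2) := by
      rw [← hs1]; exact hFTC1
    have e2 : (∫ u in u₀..(2:ℝ), P u) - (∫ u in u₀..(2:ℝ), Qm u) = W 2 - W u₀ := by
      rw [← hs2]; exact hFTC2
    rw [hWm2] at e1
    rw [hW2] at e2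
    have hHcD : H = c • D := by
      rw [hHsplit, ← hQsum]
      have h0 : ((∫ u in (-2:ℝ)..u₀, P u) - (∫ u in (-2:ℝ)..u₀, Qp u))
          + ((∫ u in u₀..(2:ℝ), P u) - (∫ u in u₀..(2:ℝ), Qm u)) = 0 := by
        rw [e1, e2]; abel
      have h1 : ((∫ u in (-2:ℝ)..u₀, P u) + (∫ u in u₀..(2:ℝ), P u))
          - ((∫ u in (-2:ℝ)..u₀, Qp u) + (∫ u in u₀..(2:ℝ), Qm u)) = 0 := by
        rw [← h0]; abel
      exact sub_eq_zero.1 h1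
    have hFd' : HasDerivAt F D t := by
      have hcd : c⁻¹ • H = D := by
        rw [hHcD, smul_smul, inv_mul_cancel₀ hc0.ne', one_smul]
      rw [← hcd]; exact hFd
    -- transfer to mollify
    have hev : mollify φ σ δ γ =ᶠ[nhds t] F := by
      filter_upwards [Metric.ball_mem_nhds t (show (0:ℝ) < δ/8 by positivity)] with s hs
      rw [Metric.mem_ball, Real.dist_eq] at hs
      have hsabs : |s| < δ/4 := by
        have h1 : |s| - |t| ≤ |s - t| := abs_sub_abs_le_abs_sub s t
        have h2 : |t| ≤ δ/100 := htc.trans hcδ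
        linarith
      have hσs : σ (s/δ) = 1/100 := by
        apply hσeq
        rw [abs_div, abs_of_pos hδ0, div_le_iff₀ hδ0]
        linarith
      have hsds : sigmaDel σ δ s = c := by
        show δ^2 * σ (s/δ) = c
        rw [hσs, hcdef]; ring
      show mollify φ σ δ γ s = F s
      rw [hF]
      simp only [mollify, hsds]
    exact hFd'.congr_of_eventuallyEq hev
  · -- Case A : c < |t|, the argument stays away from the corner
    obtain ⟨Mσ, hMσ⟩ : ∃ M : ℝ, ∀ x : ℝ, |deriv σ x| ≤ M := by
      have hσz : ∀ x : ℝ, x ∉ Icc (-(1/2) : ℝ) (1/2) → σ x = 0 :=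
        fun x hx => supp_zero hσsupp hx
      have hσCS : HasCompactSupport σ := HasCompactSupport.intro isCompact_Icc hσz
      obtain ⟨M, hM⟩ := (hσCS.deriv).exists_bound_of_continuous (hσsm.continuous_deriv h1top)
      exact ⟨M, fun x => by simpa using hM x⟩
    have hMσ0 : 0 ≤ Mσ := le_trans (abs_nonneg _) (hMσ 0)
    set r : ℝ := min ((|t| - c)/2) (ε - |t|) with hrdef
    have hr0 : 0 < r := lt_min (by linarith) (by linarith)
    have hra : r ≤ (|t| - c)/2 := min_le_left _ _
    have hrε : r ≤ ε - |t| := min_le_right _ _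
    have hx_facts : ∀ x ∈ Metric.ball t r, (|t|+c)/2 ≤ |x| ∧ |x| ≤ ε := by
      intro x hx
      rw [Metric.mem_ball, Real.dist_eq] at hx
      have h1 : |x| - |t| ≤ |x - t| := abs_sub_abs_le_abs_sub x t
      have h2 : |t| - |x| ≤ |x - t| := by
        have h3 := abs_sub_abs_le_abs_sub t x
        rw [abs_sub_comm t x] at h3; linarith
      constructor <;> linarith
    have harg_facts : ∀ x ∈ Metric.ball t r, ∀ u : ℝ, |u| ≤ 1 →
        ((|t| - c)/2 ≤ |x - sigmaDel σ δ x * u| ∧ |x - sigmaDel σ δ x * u| ≤ ε + c) := by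
      intro x hx u hu
      obtain ⟨hx1, hx2⟩ := hx_facts x hx
      have h1 : |sigmaDel σ δ x * u| ≤ c := habs_mul x u hu
      have h2 : |x| - |sigmaDel σ δ x * u| ≤ |x - sigmaDel σ δ x * u| :=
        abs_sub_abs_le_abs_sub _ _
      have h3 : |x - sigmaDel σ δ x * u| ≤ |x| + |sigmaDel σ δ x * u| := by
        calc |x - sigmaDel σ δ x * u| = |x + -(sigmaDel σ δ x * u)| := by rw [sub_eq_add_neg]
          _ ≤ |x| + |-(sigmaDel σ δ x * u)| := abs_add_le _ _
          _ = |x| + |sigmaDel σ δ x * u| := by rw [abs_neg]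
      constructor <;> linarith
    have harg_mem' : ∀ x ∈ Metric.ball t r, ∀ u : ℝ, |u| ≤ 1 →
        ((x - sigmaDel σ δ x * u) ∈ Ioo (-(2*ε)) (2*ε) ∧ x - sigmaDel σ δ x * u ≠ 0) := by
      intro x hx u hu
      obtain ⟨hl, hr'⟩ := harg_facts x hx u hu
      have h4 := abs_le.1 hr'
      refine ⟨⟨by linarith [hcε], by linarith [hcε]⟩, ?_⟩
      intro h0
      rw [h0] at hl
      simp only [abs_zero] at hl
      linarith
    set K : Set ℝ := Icc (-(ε+c)) (ε+c) ∩ {y : ℝ | (|t| - c)/2 ≤ |y|} with hKdef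
    have hKc : IsCompact K :=
      isCompact_Icc.inter_right (isClosed_le continuous_const continuous_abs)
    have hKmem : ∀ y ∈ K, y ∈ Ioo (-(2*ε)) (2*ε) ∧ y ≠ 0 := by
      rintro y ⟨hy1, hy2⟩
      simp only [mem_setOf_eq] at hy2
      refine ⟨⟨by linarith [hy1.1, hcε], by linarith [hy1.2, hcε]⟩, ?_⟩
      intro h0
      rw [h0] at hy2
      simp only [abs_zero] at hy2
      linarith
    obtain ⟨CK, hCK⟩ : ∃ C : ℝ, ∀ y ∈ K, ‖γ' y‖ ≤ C :=
      hKc.exists_bound_of_continuousOn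
        (fun y hy => (hγ'cont y (hKmem y hy).1 (hKmem y hy).2).continuousWithinAt)
    have habs_εc : |ε + c| = ε + c := abs_of_pos (by linarith)
    have hεcK : (ε + c) ∈ K := by
      refine ⟨⟨by linarith, le_rfl⟩, ?_⟩
      show (|t| - c)/2 ≤ |ε + c|
      rw [habs_εc]
      linarith
    have hCK0 : 0 ≤ CK := le_trans (norm_nonneg _) (hCK _ hεcK)
    have hargK : ∀ x ∈ Metric.ball t r, ∀ u : ℝ, |u| ≤ 1 →
        (x - sigmaDel σ δ x * u) ∈ K := by
      intro x hx u hu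
      obtain ⟨hl, hr'⟩ := harg_facts x hx u hu
      have h4 := abs_le.1 hr'
      exact ⟨⟨h4.1, h4.2⟩, hl⟩
    have htball : t ∈ Metric.ball t r := Metric.mem_ball_self hr0
    -- continuity of the integrand
    have hcontA : ∀ x ∈ Metric.ball t r,
        Continuous (fun u : ℝ => φ u • γ (x - sigmaDel σ δ x * u)) := by
      intro x hx
      rw [continuous_iff_continuousAt]
      intro u₀
      by_cases hu : |u₀| < 3/2
      · apply ContinuousAt.smul hφc.continuousAt
        have hγat : ContinuousAt γ (x - sigmaDel σ δ x * u₀) := by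
          apply hγcont.continuousAt (isOpen_Ioo.mem_nhds _)
          have h1 : |sigmaDel σ δ x * u₀| ≤ (3/2)*c := by
            rw [abs_mul, abs_of_nonneg (hsd0 x)]
            nlinarith [hsdc x, hsd0 x, abs_nonneg u₀]
          have h3 : |x - sigmaDel σ δ x * u₀| ≤ |x| + |sigmaDel σ δ x * u₀| := by
            calc |x - sigmaDel σ δ x * u₀| = |x + -(sigmaDel σ δ x * u₀)| := by
                  rw [sub_eq_add_neg]
              _ ≤ |x| + |-(sigmaDel σ δ x * u₀)| := abs_add_le _ _
              _ = |x| + |sigmaDel σ δ x * u₀| := by rw [abs_neg]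
          have hx2 := (hx_facts x hx).2
          have h5 : |x - sigmaDel σ δ x * u₀| ≤ ε + (3/2)*c := by linarith
          have h6 := abs_le.1 h5
          exact ⟨by linarith [hcε], by linarith [hcε]⟩
        have hinnerAt : ContinuousAt (fun u : ℝ => x - sigmaDel σ δ x * u) u₀ :=
          (continuous_const.sub (continuous_const.mul continuous_id)).continuousAt
        exact ContinuousAt.comp (f := fun u : ℝ => x - sigmaDel σ δ x * u) hγat hinnerAt
      · have hop : IsOpen {u : ℝ | 1 < |u|} := isOpen_lt continuous_const continuous_abs
        have hmem : u₀ ∈ {u : ℝ | 1 < |u|} := by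
          simp only [mem_setOf_eq]; push_neg at hu; linarith
        have hev : (fun u : ℝ => φ u • γ (x - sigmaDel σ δ x * u)) =ᶠ[nhds u₀]
            fun _ => (0:E) := by
          filter_upwards [hop.mem_nhds hmem] with u hu1
          rw [hφz u (fun hIcc => absurd (abs_le.2 ⟨hIcc.1, hIcc.2⟩) (not_le.2 hu1)), zero_smul]
        exact (continuousAt_congr hev).2 continuousAt_const
    -- continuity of the derivative integrand at t
    have hcontA' : Continuous
        (fun u : ℝ => ((1 - u * δ * deriv σ (t/δ)) * φ u) • γ' (t - sigmaDel σ δ t * u)) := by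
      rw [continuous_iff_continuousAt]
      intro u₀
      have hsc : Continuous (fun u : ℝ => (1 - u * δ * deriv σ (t/δ)) * φ u) := by fun_prop
      by_cases hu : |u₀| * c < |t|
      · apply hsc.continuousAt.smul
        have h1 : |sigmaDel σ δ t * u₀| ≤ |u₀| * c := by
          rw [abs_mul, abs_of_nonneg (hsd0 t), mul_comm]
          nlinarith [hsdc t, abs_nonneg u₀, hsd0 t]
        have h2 : |t| - |sigmaDel σ δ t * u₀| ≤ |t - sigmaDel σ δ t * u₀| :=
          abs_sub_abs_le_abs_sub _ _
        have h3 : |t - sigmaDel σ δ t * u₀| ≤ |t| + |sigmaDel σ δ t * u₀| := by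
          calc |t - sigmaDel σ δ t * u₀| = |t + -(sigmaDel σ δ t * u₀)| := by
                rw [sub_eq_add_neg]
            _ ≤ |t| + |-(sigmaDel σ δ t * u₀)| := abs_add_le _ _
            _ = |t| + |sigmaDel σ δ t * u₀| := by rw [abs_neg]
        have hne : t - sigmaDel σ δ t * u₀ ≠ 0 := by
          intro h0
          rw [h0] at h2
          simp only [abs_zero] at h2
          linarith
        have hmem : t - sigmaDel σ δ t * u₀ ∈ Ioo (-(2*ε)) (2*ε) := by
          have h5 : |t - sigmaDel σ δ t * u₀| ≤ 2*|t| := by linarith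
          have h6 := abs_le.1 h5
          exact ⟨by linarith, by linarith⟩
        have hinnerAt : ContinuousAt (fun u : ℝ => t - sigmaDel σ δ t * u) u₀ :=
          (continuous_const.sub (continuous_const.mul continuous_id)).continuousAt
        exact ContinuousAt.comp (f := fun u : ℝ => t - sigmaDel σ δ t * u)
          (hγ'cont _ hmem hne) hinnerAt
      · have hu1 : 1 < |u₀| := by nlinarith [hc0, abs_nonneg u₀]
        have hop : IsOpen {u : ℝ | 1 < |u|} := isOpen_lt continuous_const continuous_abs
        have hev : (fun u : ℝ => ((1 - u * δ * deriv σ (t/δ)) * φ u) •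
            γ' (t - sigmaDel σ δ t * u)) =ᶠ[nhds u₀] fun _ => (0:E) := by
          filter_upwards [hop.mem_nhds hu1] with u hu2
          rw [hφz u (fun hIcc => absurd (abs_le.2 ⟨hIcc.1, hIcc.2⟩) (not_le.2 hu2)),
            mul_zero, zero_smul]
        exact (continuousAt_congr hev).2 continuousAt_const
    -- differentiability of the integrand
    have hdiffA : ∀ u : ℝ, ∀ x ∈ Metric.ball t r,
        HasDerivAt (fun x => φ u • γ (x - sigmaDel σ δ x * u))
          (((1 - u * δ * deriv σ (x/δ)) * φ u) • γ' (x - sigmaDel σ δ x * u)) x := by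
      intro u x hx
      by_cases hφu : φ u = 0
      · simp only [hφu, zero_smul, mul_zero]
        exact hasDerivAt_const x 0
      · have hu1 : |u| ≤ 1 := by
          have h1 := hφsupp (Function.mem_support.2 hφu)
          exact abs_le.2 ⟨h1.1, h1.2⟩
        obtain ⟨hmem, hne⟩ := harg_mem' x hx u hu1
        have hsdx : HasDerivAt (fun y : ℝ => sigmaDel σ δ y) (δ * deriv σ (x/δ)) x := by
          have h1 : HasDerivAt (fun y : ℝ => y/δ) (1/δ) x := by
            simpa using (hasDerivAt_id x).div_const δ
          have h2 : HasDerivAt σ (deriv σ (x/δ)) (x/δ) :=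
            (hσsm.differentiable (by simp) _).hasDerivAt
          have h3 : HasDerivAt (fun y : ℝ => σ (y/δ)) (deriv σ (x/δ) * (1/δ)) x := by
            simpa [Function.comp_def] using h2.comp x h1
          have h4 := h3.const_mul (δ^2)
          have h5 : δ^2 * (deriv σ (x/δ) * (1/δ)) = δ * deriv σ (x/δ) := by
            field_simp
          rw [h5] at h4
          exact h4
        have hζ : HasDerivAt (fun y : ℝ => y - sigmaDel σ δ y * u)
            (1 - (δ * deriv σ (x/δ)) * u) x :=
          (hasDerivAt_id x).sub (hsdx.mul_const u)
        have hγd : HasDerivAt γ (γ' (x - sigmaDel σ δ x * u)) (x - sigmaDel σ δ x * u) :=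
          hγ'1 _ hmem hne
        have hcomp := (HasDerivAt.scomp x hγd hζ).const_smul (φ u)
        simp only [Function.comp_def] at hcomp
        convert hcomp using 1
        · rfl
        rw [smul_smul]
        congr 1
        ring
    -- bound
    have hboundA : ∀ u : ℝ, ∀ x ∈ Metric.ball t r,
        ‖((1 - u * δ * deriv σ (x/δ)) * φ u) • γ' (x - sigmaDel σ δ x * u)‖ ≤
          (Icc (-1:ℝ) 1).indicator (fun _ => (1 + Mσ) * CK) u := by
      intro u x hx
      by_cases hu : u ∈ Icc (-1:ℝ) 1
      · rw [indicator_of_mem hu]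
        show ‖((1 - u * δ * deriv σ (x/δ)) * φ u) • γ' (x - sigmaDel σ δ x * u)‖ ≤ (1 + Mσ) * CK
        have hu1 : |u| ≤ 1 := abs_le.2 ⟨hu.1, hu.2⟩
        rw [norm_smul, Real.norm_eq_abs]
        have h2 : |1 - u * δ * deriv σ (x/δ)| ≤ 1 + Mσ := by
          have h3 : |1 - u * δ * deriv σ (x/δ)| ≤ |(1:ℝ)| + |u * δ * deriv σ (x/δ)| := by
            calc |1 - u * δ * deriv σ (x/δ)| = |1 + -(u * δ * deriv σ (x/δ))| := by
                  rw [sub_eq_add_neg]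
              _ ≤ |(1:ℝ)| + |-(u * δ * deriv σ (x/δ))| := abs_add_le _ _
              _ = |(1:ℝ)| + |u * δ * deriv σ (x/δ)| := by rw [abs_neg]
          have h4 : |u * δ * deriv σ (x/δ)| ≤ Mσ := by
            rw [abs_mul, abs_mul, abs_of_pos hδ0]
            have hb1 : |u| * δ ≤ 1 := by nlinarith [abs_nonneg u]
            calc |u| * δ * |deriv σ (x/δ)| ≤ 1 * Mσ :=
                  mul_le_mul hb1 (hMσ (x/δ)) (abs_nonneg _) one_pos.le
              _ = Mσ := one_mul _
          rw [abs_one] at h3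
          linarith
        have h5 : |φ u| ≤ 1 := abs_le.2 ⟨by linarith [hφ0 u], hφ1 u⟩
        have h6 : ‖γ' (x - sigmaDel σ δ x * u)‖ ≤ CK := hCK _ (hargK x hx u hu1)
        have h7 : |(1 - u * δ * deriv σ (x/δ)) * φ u| ≤ 1 + Mσ := by
          rw [abs_mul]
          nlinarith [abs_nonneg (1 - u * δ * deriv σ (x/δ)), abs_nonneg (φ u)]
        exact mul_le_mul h7 h6 (norm_nonneg _) (by linarith)
      · rw [indicator_of_notMem hu, hφz u hu, mul_zero, zero_smul, norm_zero]
    have hmeasA : ∀ᶠ x in nhds t,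
        AEStronglyMeasurable (fun u : ℝ => φ u • γ (x - sigmaDel σ δ x * u)) volume := by
      filter_upwards [Metric.ball_mem_nhds t hr0] with x hx
      exact (hcontA x hx).aestronglyMeasurable
    have hintA : Integrable (fun u : ℝ => φ u • γ (t - sigmaDel σ δ t * u)) volume := by
      apply (hcontA t htball).integrable_of_hasCompactSupport
      exact HasCompactSupport.intro isCompact_Icc
        (fun u hu => by rw [hφz u hu, zero_smul])
    have hbintA : Integrable ((Icc (-1:ℝ) 1).indicator (fun _ => (1 + Mσ) * CK)) volume := by
      rw [integrable_indicator_iff measurableSet_Icc]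
      exact integrableOn_const isCompact_Icc.measure_lt_top.ne
    have hres := hasDerivAt_integral_of_dominated_loc_of_deriv_le (Metric.ball_mem_nhds t hr0) hmeasA hintA
      hcontA'.aestronglyMeasurable (ae_of_all _ hboundA) hbintA (ae_of_all _ hdiffA)
    have hmoll : mollify φ σ δ γ = fun x : ℝ => ∫ u : ℝ, φ u • γ (x - sigmaDel σ δ x * u) :=
      rfl
    rw [hmoll]
    exact hres.2
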